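/- Let X be a positive random variable with a = E[X] > 0 and Var(X) ≤ a². Then for every γ ∈ [0,1], Var(X^γ) ≤ 2 a^{2γ} · (Var(X)/a²). -/

import Mathlib

open MeasureTheory ProbabilityTheory

lemma rpow_diff_sq_le (a x γ : ℝ) (ha : 0 < a) (hx : 0 < x) (hγ0 : 0 ≤ γ) (hγ1 : γ ≤ 1) :
    (x ^ γ - a ^ γ)^2 ≤ (a ^ (γ - 1))^2 * (x - a)^2 := by
  have h : |x ^ γ - a ^ γ| ≤ a ^ (γ - 1) * |x - a| := by
    have key : ∀ u : ℝ, 0 < u → |u ^ γ - 1| ≤ |u - 1| := by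
      intro u hu
      rcases le_total u 1 with h1 | h1
      · have h2 : u ≤ u ^ γ := by
          calc u = u ^ (1:ℝ) := (Real.rpow_one u).symm
          _ ≤ u ^ γ := Real.rpow_le_rpow_of_exponent_ge hu h1 hγ1
        have h3 : u ^ γ ≤ 1 := Real.rpow_le_one hu.le h1 hγ0
        rw [abs_sub_comm, abs_sub_comm u 1, abs_of_nonneg (by linarith),
          abs_of_nonneg (by linarith)]
        linarith
      · have h2 : u ^ γ ≤ u := by
          calc u ^ γ ≤ u ^ (1:ℝ) := Real.rpow_le_rpow_of_exponent_le h1 hγ1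
          _ = u := Real.rpow_one u
        have h3 : (1:ℝ) ≤ u ^ γ := Real.one_le_rpow h1 hγ0
        rw [abs_of_nonneg (by linarith), abs_of_nonneg (by linarith)]
        linarith
    have := key (x / a) (div_pos hx ha)
    have hd : (x / a) ^ γ = x ^ γ / a ^ γ := Real.div_rpow hx.le ha.le γ
    rw [hd] at this
    have haγ : 0 < a ^ γ := Real.rpow_pos_of_pos ha γ
    have h1 : |x ^ γ / a ^ γ - 1| = |x ^ γ - a ^ γ| / a ^ γ := by
      rw [show x ^ γ / a ^ γ - 1 = (x ^ γ - a ^ γ) / a ^ γ by field_simp, abs_div,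
        abs_of_pos haγ]
    have h2 : |x / a - 1| = |x - a| / a := by
      rw [show x / a - 1 = (x - a) / a by field_simp, abs_div, abs_of_pos ha]
    rw [h1, h2] at this
    have : |x ^ γ - a ^ γ| ≤ a ^ γ / a * |x - a| := by
      rw [div_le_iff₀ haγ] at this
      calc |x ^ γ - a ^ γ| ≤ |x - a| / a * a ^ γ := this
      _ = a ^ γ / a * |x - a| := by ring
    rwa [show a ^ γ / a = a ^ (γ - 1) by rw [Real.rpow_sub ha, Real.rpow_one]] at this
  calc (x ^ γ - a ^ γ)^2 = |x ^ γ - a ^ γ|^2 := (sq_abs _).symm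
  _ ≤ (a ^ (γ-1) * |x - a|)^2 := by
      apply pow_le_pow_left₀ (abs_nonneg _) h
  _ = (a ^ (γ-1))^2 * (x-a)^2 := by rw [mul_pow, sq_abs]

lemma var_le_integral_sub_sq {Ω : Type*} [MeasurableSpace Ω] (μ : Measure Ω)
    [IsProbabilityMeasure μ] (Y : Ω → ℝ) (hY : MemLp Y 2 μ) (c : ℝ) :
    variance Y μ ≤ ∫ ω, (Y ω - c)^2 ∂μ := by
  have h1 : Integrable (fun ω => (Y ω)^2) μ := hY.integrable_sq
  have h2 : Integrable Y μ := hY.integrable one_le_two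
  have hexp : ∫ ω, (Y ω - c)^2 ∂μ
      = (∫ ω, (Y ω)^2 ∂μ) - 2*c*(∫ ω, Y ω ∂μ) + c^2 := by
    have : ∀ ω, (Y ω - c)^2 = (Y ω)^2 - 2*c*(Y ω) + c^2 := fun ω => by ring
    simp_rw [this]
    have hcm : Integrable (fun ω => 2*c*Y ω) μ := h2.const_mul _
    have hsub : Integrable (fun ω => Y ω ^2 - 2*c*Y ω) μ := h1.sub hcm
    rw [integral_add hsub (integrable_const _), integral_sub h1 hcm, integral_const_mul,
      integral_const]
    simp
  rw [variance_eq_sub hY, hexp]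
  simp only [Pi.pow_apply]
  nlinarith [sq_nonneg ((∫ ω, Y ω ∂μ) - c)]

/-- Let `X` be a positive random variable with mean `a > 0` and `Var(X) ≤ a²`. Then for
every `γ ∈ [0,1]`, `Var(X^γ) ≤ 2 a^(2γ) (Var(X)/a²)`. -/
theorem stmt2 {Ω : Type*} [MeasurableSpace Ω] (μ : Measure Ω) [IsProbabilityMeasure μ]
    (X : Ω → ℝ) (hXpos : ∀ ω, 0 < X ω) (hX2 : MemLp X 2 μ)
    (a : ℝ) (ha : a = ∫ ω, X ω ∂μ) (ha0 : 0 < a)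
    (hvar : variance X μ ≤ a ^ 2)
    (γ : ℝ) (hγ0 : 0 ≤ γ) (hγ1 : γ ≤ 1) :
    variance (fun ω => X ω ^ γ) μ ≤ 2 * a ^ (2 * γ) * (variance X μ / a ^ 2) := by
  -- Memℒp of X^γ
  have hmeas : AEStronglyMeasurable (fun ω => X ω ^ γ) μ :=
    (Real.continuous_rpow_const hγ0).comp_aestronglyMeasurable hX2.1
  have hbound : ∀ ω, ‖X ω ^ γ‖ ≤ ‖1 + X ω‖ := by
    intro ω
    have hx := hXpos ω
    have h1 : X ω ^ γ ≤ 1 + X ω := by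
      rcases le_total (X ω) 1 with h | h
      · have := Real.rpow_le_one hx.le h hγ0
        linarith
      · have : X ω ^ γ ≤ X ω ^ (1:ℝ) := Real.rpow_le_rpow_of_exponent_le h hγ1
        rw [Real.rpow_one] at this
        linarith
    have h0 : 0 < X ω ^ γ := Real.rpow_pos_of_pos hx γ
    rw [Real.norm_eq_abs, Real.norm_eq_abs, abs_of_pos h0, abs_of_pos (by linarith)]
    exact h1
  have hXγ2 : MemLp (fun ω => X ω ^ γ) 2 μ :=
    MemLp.of_le ((memLp_const (1:ℝ)).add hX2) hmeas (ae_of_all μ hbound)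
  -- variance of X as an integral
  have hvarX : variance X μ = ∫ ω, (X ω - a)^2 ∂μ := by
    rw [variance_eq_integral hX2.1.aemeasurable, ← ha]
  -- integrability of (X - a)^2
  have hintsub : Integrable (fun ω => (X ω - a)^2) μ := by
    have : MemLp (fun ω => X ω - a) 2 μ := hX2.sub (memLp_const a)
    exact this.integrable_sq
  have step1 : variance (fun ω => X ω ^ γ) μ ≤ ∫ ω, (X ω ^ γ - a ^ γ)^2 ∂μ :=
    var_le_integral_sub_sq μ _ hXγ2 (a ^ γ)
  have step2 : ∫ ω, (X ω ^ γ - a ^ γ)^2 ∂μ ≤ ∫ ω, (a ^ (γ-1))^2 * (X ω - a)^2 ∂μ := by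
    apply integral_mono_of_nonneg
    · exact ae_of_all μ fun ω => sq_nonneg _
    · exact hintsub.const_mul _
    · exact ae_of_all μ fun ω => rpow_diff_sq_le a (X ω) γ ha0 (hXpos ω) hγ0 hγ1
  have step3 : ∫ ω, (a ^ (γ-1))^2 * (X ω - a)^2 ∂μ = (a ^ (γ-1))^2 * variance X μ := by
    rw [integral_const_mul, hvarX]
  have key : (a ^ (γ-1))^2 * variance X μ = a ^ (2*γ) * (variance X μ / a ^ 2) := by
    have h1 : (a ^ (γ-1))^2 = a ^ (2*γ) / a ^ 2 := by
      rw [← Real.rpow_natCast (a ^ (γ-1)) 2, ← Real.rpow_mul ha0.le, ← Real.rpow_natCast a 2,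
        ← Real.rpow_sub ha0]
      norm_num
      ring_nf
    rw [h1]
    ring
  have hfinal : (a ^ (γ-1))^2 * variance X μ ≤ 2 * a ^ (2*γ) * (variance X μ / a ^ 2) := by
    rw [key]
    have h2 : 0 ≤ a ^ (2*γ) * (variance X μ / a ^ 2) := by
      apply mul_nonneg (Real.rpow_pos_of_pos ha0 _).le
      exact div_nonneg (variance_nonneg X μ) (by positivity)
    linarith
  calc variance (fun ω => X ω ^ γ) μ ≤ ∫ ω, (X ω ^ γ - a ^ γ)^2 ∂μ := step1
  _ ≤ ∫ ω, (a ^ (γ-1))^2 * (X ω - a)^2 ∂μ := step2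
  _ = (a ^ (γ-1))^2 * variance X μ := step3
  _ ≤ 2 * a ^ (2*γ) * (variance X μ / a ^ 2) := hfinal
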